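/- Let G = (V,E) be a graph and G' the graph obtained from G by adding, for each edge (u,v) ∈ E, a new vertex t_{uv} adjacent to exactly u and v. Then a set S ⊆ V is a vertex cover of G if and only if removing S from G' makes G' triangle-free. -/

import Mathlib

/-- The edge-apex augmentation `G'` of `G`: for every edge `(u,v)` of `G`, a new
vertex `t_{uv}` is added, adjacent exactly to `u` and `v`. -/
def apexGraph {V : Type*} (G : SimpleGraph V) : SimpleGraph (V ⊕ G.edgeSet) :=
  SimpleGraph.fromRel (fun a b => match a, b with
    | Sum.inl u, Sum.inl v => G.Adj u v
    | Sum.inl u, Sum.inr e => u ∈ e.1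
    | _, _ => False)

lemma apex_adj_inl_inl {V : Type*} {G : SimpleGraph V} {u v : V} :
    (apexGraph G).Adj (Sum.inl u) (Sum.inl v) ↔ G.Adj u v := by
  simp only [apexGraph, SimpleGraph.fromRel_adj]
  classical
  constructor
  · rintro ⟨h, h' | h'⟩
    · exact h'
    · exact h'.symm
  · intro h; exact ⟨by simp [h.ne], Or.inl h⟩

lemma apex_not_adj_inr_inr {V : Type*} {G : SimpleGraph V} {e f : G.edgeSet} :
    ¬ (apexGraph G).Adj (Sum.inr e) (Sum.inr f) := by
  simp [apexGraph, SimpleGraph.fromRel_adj]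

lemma apex_adj_inl_inr {V : Type*} {G : SimpleGraph V} {u : V} {e : G.edgeSet}
    (h : u ∈ e.1) : (apexGraph G).Adj (Sum.inl u) (Sum.inr e) := by
  simp only [apexGraph, SimpleGraph.fromRel_adj]
  exact ⟨by simp, Or.inl h⟩

/-- `S ⊆ V` is a vertex cover of `G` iff removing `S` from `G'` makes `G'` triangle-free. -/
theorem vertexCover_iff_apex_triangleFree {V : Type*} (G : SimpleGraph V) (S : Set V) :
    (∀ u v, G.Adj u v → u ∈ S ∨ v ∈ S) ↔
      ((apexGraph G).induce {x | x ∉ Sum.inl '' S}).CliqueFree 3 := by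
  classical
  constructor
  · intro h t ht
    obtain ⟨a, b, c, hab, hac, hbc, rfl⟩ := Finset.card_eq_three.1 ht.card_eq
    have hc := ht.isClique
    have h1 : (apexGraph G).Adj a.1 b.1 := hc (by simp) (by simp) (by simpa using hab)
    have h2 : (apexGraph G).Adj a.1 c.1 := hc (by simp) (by simp) (by simpa using hac)
    have h3 : (apexGraph G).Adj b.1 c.1 := hc (by simp) (by simp) (by simpa using hbc)
    -- helper: two inl vertices outside S adjacent is impossible
    have key : ∀ (x y : {x : V ⊕ G.edgeSet // x ∈ {x | x ∉ Sum.inl '' S}}) (u v : V),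
        x.1 = Sum.inl u → y.1 = Sum.inl v → ¬ (apexGraph G).Adj x.1 y.1 := by
      rintro ⟨x, hx⟩ ⟨y, hy⟩ u v rfl rfl hadj
      rw [apex_adj_inl_inl] at hadj
      rcases h u v hadj with hu | hv
      · exact hx ⟨u, hu, rfl⟩
      · exact hy ⟨v, hv, rfl⟩
    obtain ⟨a, ha⟩ := a; obtain ⟨b, hb⟩ := b; obtain ⟨c, hc'⟩ := c
    rcases a with u | e <;> rcases b with v | f <;> rcases c with w | g
    · exact key ⟨_, ha⟩ ⟨_, hb⟩ u v rfl rfl h1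
    · exact key ⟨_, ha⟩ ⟨_, hb⟩ u v rfl rfl h1
    · exact key ⟨_, ha⟩ ⟨_, hc'⟩ u w rfl rfl h2
    · exact apex_not_adj_inr_inr h3
    · exact key ⟨_, hb⟩ ⟨_, hc'⟩ v w rfl rfl h3
    · exact apex_not_adj_inr_inr h2
    · exact apex_not_adj_inr_inr h1
    · exact apex_not_adj_inr_inr h1
  · intro hfree u v hadj
    by_contra hS
    push_neg at hS
    obtain ⟨hu, hv⟩ := hS
    set e : G.edgeSet := ⟨s(u, v), hadj⟩ with he
    have hanotin : (Sum.inl u : V ⊕ G.edgeSet) ∈ {x | x ∉ Sum.inl '' S} := by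
      rintro ⟨w, hw, hwe⟩
      exact hu (by cases Sum.inl.inj hwe; exact hw)
    have hbnotin : (Sum.inl v : V ⊕ G.edgeSet) ∈ {x | x ∉ Sum.inl '' S} := by
      rintro ⟨w, hw, hwe⟩
      exact hv (by cases Sum.inl.inj hwe; exact hw)
    have hcnotin : (Sum.inr e : V ⊕ G.edgeSet) ∈ {x | x ∉ Sum.inl '' S} := by
      rintro ⟨w, _, hwe⟩
      exact nomatch hwe
    refine hfree {⟨_, hanotin⟩, ⟨_, hbnotin⟩, ⟨_, hcnotin⟩} ?_
    rw [SimpleGraph.is3Clique_triple_iff]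
    refine ⟨?_, ?_, ?_⟩
    · show (apexGraph G).Adj (Sum.inl u) (Sum.inl v)
      exact apex_adj_inl_inl.2 hadj
    · show (apexGraph G).Adj (Sum.inl u) (Sum.inr e)
      exact apex_adj_inl_inr (by simp [he])
    · show (apexGraph G).Adj (Sum.inl v) (Sum.inr e)
      exact apex_adj_inl_inr (by simp [he])
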